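/- Two-point representation formula: let c₁, c₂ and ω, ω₁, ω₂ be octonions with ω² = ω₁² = ω₂² = -1 and ω₁ ≠ ω₂. Set f₁ = c₁ + ω₁*c₂ and f₂ = c₁ + ω₂*c₂. Then c₁ + ω*c₂ = (ω - ω₂) * ((ω₁ - ω₂)⁻¹ * f₁) - (ω - ω₁) * ((ω₁ - ω₂)⁻¹ * f₂). -/
import Mathlib


/-- The octonions, constructed from the quaternions by the Cayley–Dickson doubling. -/
@[ext] structure Octonion : Type where
  q1 : Quaternion ℝ
  q2 : Quaternion ℝ

namespace Octonion

noncomputable instance : Zero Octonion := ⟨⟨0, 0⟩⟩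
noncomputable instance : One Octonion := ⟨⟨1, 0⟩⟩
noncomputable instance : Add Octonion := ⟨fun x y => ⟨x.q1 + y.q1, x.q2 + y.q2⟩⟩
noncomputable instance : Neg Octonion := ⟨fun x => ⟨-x.q1, -x.q2⟩⟩
noncomputable instance : Sub Octonion := ⟨fun x y => ⟨x.q1 - y.q1, x.q2 - y.q2⟩⟩

/-- Cayley–Dickson multiplication: `(a,b)(c,d) = (ac - d*b, da + bc*)`. -/
noncomputable instance : Mul Octonion :=
  ⟨fun x y => ⟨x.q1 * y.q1 - star y.q2 * x.q2, y.q2 * x.q1 + x.q2 * star y.q1⟩⟩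

noncomputable instance : SMul ℝ Octonion := ⟨fun r x => ⟨r • x.q1, r • x.q2⟩⟩

/-- Octonionic conjugation. -/
noncomputable def conj (x : Octonion) : Octonion := ⟨star x.q1, -x.q2⟩

/-- The real part of an octonion. -/
noncomputable def re (x : Octonion) : ℝ := x.q1.re

/-- The real octonion corresponding to `r : ℝ`. -/
noncomputable def ofReal (r : ℝ) : Octonion := ⟨(r : Quaternion ℝ), 0⟩

/-- The imaginary part of an octonion. -/
noncomputable def im (x : Octonion) : Octonion := ⟨x.q1 - ((x.q1.re : ℝ) : Quaternion ℝ), x.q2⟩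

/-- The Euclidean norm of an octonion (the standard norm of `ℝ⁸`). -/
noncomputable def norm (x : Octonion) : ℝ :=
  Real.sqrt (Quaternion.normSq x.q1 + Quaternion.normSq x.q2)

/-- The standard real inner product on `𝕆 ≅ ℝ⁸`. -/
noncomputable def inner (x y : Octonion) : ℝ := re (x * conj y)

/-- Powers of an octonion (octonions are power-associative). -/
noncomputable def pow (x : Octonion) : ℕ → Octonion
  | 0 => 1
  | n + 1 => pow x n * x

/-- The associator of three octonions. -/
noncomputable def assoc (a b c : Octonion) : Octonion := (a * b) * c - a * (b * c)

end Octonion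


set_option maxHeartbeats 1000000

namespace Octonion

@[simp] lemma mul_q1 (x y : Octonion) : (x * y).q1 = x.q1 * y.q1 - star y.q2 * x.q2 := rfl
@[simp] lemma mul_q2 (x y : Octonion) : (x * y).q2 = y.q2 * x.q1 + x.q2 * star y.q1 := rfl
@[simp] lemma add_q1 (x y : Octonion) : (x + y).q1 = x.q1 + y.q1 := rfl
@[simp] lemma add_q2 (x y : Octonion) : (x + y).q2 = x.q2 + y.q2 := rfl
@[simp] lemma sub_q1 (x y : Octonion) : (x - y).q1 = x.q1 - y.q1 := rfl
@[simp] lemma sub_q2 (x y : Octonion) : (x - y).q2 = x.q2 - y.q2 := rfl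
@[simp] lemma neg_q1 (x : Octonion) : (-x).q1 = -x.q1 := rfl
@[simp] lemma neg_q2 (x : Octonion) : (-x).q2 = -x.q2 := rfl
@[simp] lemma smul_q1 (r : ℝ) (x : Octonion) : (r • x).q1 = r • x.q1 := rfl
@[simp] lemma smul_q2 (r : ℝ) (x : Octonion) : (r • x).q2 = r • x.q2 := rfl
@[simp] lemma zero_q1 : (0 : Octonion).q1 = 0 := rfl
@[simp] lemma zero_q2 : (0 : Octonion).q2 = 0 := rfl
@[simp] lemma conj_q1 (x : Octonion) : (conj x).q1 = star x.q1 := rfl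
@[simp] lemma conj_q2 (x : Octonion) : (conj x).q2 = -x.q2 := rfl

lemma oct_left_distrib (a b c : Octonion) : a * (b + c) = a * b + a * c := by
  ext <;> simp [star_add] <;> ring
lemma oct_right_distrib (a b c : Octonion) : (a + b) * c = a * c + b * c := by
  ext <;> simp <;> ring
lemma oct_zero_mul (a : Octonion) : 0 * a = 0 := by ext <;> simp
lemma oct_mul_zero (a : Octonion) : a * 0 = 0 := by ext <;> simp

noncomputable instance : AddCommGroup Octonion where
  add_assoc a b c := by ext <;> simp [add_assoc]
  zero_add a := by ext <;> simp
  add_zero a := by ext <;> simp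
  add_comm a b := by ext <;> simp [add_comm]
  neg_add_cancel a := by ext <;> simp
  sub_eq_add_neg a b := by ext <;> simp [sub_eq_add_neg]
  nsmul := nsmulRec
  zsmul := zsmulRec

noncomputable instance : NonUnitalNonAssocRing Octonion where
  left_distrib := oct_left_distrib
  right_distrib := oct_right_distrib
  zero_mul := oct_zero_mul
  mul_zero := oct_mul_zero

lemma oct_one_smul (x : Octonion) : (1 : ℝ) • x = x := by ext <;> simp
lemma oct_mul_smul (r s : ℝ) (x : Octonion) : (r * s) • x = r • s • x := by
  ext <;> simp [mul_smul]
lemma oct_smul_add (r : ℝ) (x y : Octonion) : r • (x + y) = r • x + r • y := by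
  ext <;> simp
lemma oct_add_smul (r s : ℝ) (x : Octonion) : (r + s) • x = r • x + s • x := by
  ext <;> simp [add_smul]
lemma oct_zero_smul (x : Octonion) : (0 : ℝ) • x = 0 := by ext <;> simp
lemma oct_smul_zero (r : ℝ) : r • (0 : Octonion) = 0 := by ext <;> simp

noncomputable instance : Module ℝ Octonion where
  one_smul := oct_one_smul
  mul_smul := oct_mul_smul
  smul_add := oct_smul_add
  add_smul := oct_add_smul
  zero_smul := oct_zero_smul
  smul_zero := oct_smul_zero

lemma oct_smul_mul (r : ℝ) (x y : Octonion) : (r • x) * y = r • (x * y) := by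
  ext <;> simp [Quaternion.ext_iff, mul_comm, mul_assoc, mul_left_comm] <;> ring
lemma oct_mul_smul_comm (r : ℝ) (x y : Octonion) : x * (r • y) = r • (x * y) := by
  ext <;> simp [Quaternion.ext_iff] <;> ring

lemma conj_mul_mul (a b : Octonion) :
    conj a * (a * b) = (Quaternion.normSq a.q1 + Quaternion.normSq a.q2) • b := by
  ext <;> simp [Quaternion.ext_iff, Quaternion.normSq_def'] <;> ring

lemma mul_conj_mul (a b : Octonion) :
    a * (conj a * b) = (Quaternion.normSq a.q1 + Quaternion.normSq a.q2) • b := by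
  ext <;> simp [Quaternion.ext_iff, Quaternion.normSq_def'] <;> ring



end Octonion

open Octonion in
theorem octonion_two_point_representation (c₁ c₂ ω ω₁ ω₂ f₁ f₂ : Octonion)
    (hω : ω * ω = -1) (h₁ : ω₁ * ω₁ = -1) (h₂ : ω₂ * ω₂ = -1) (hne : ω₁ ≠ ω₂)
    (hf₁ : f₁ = c₁ + ω₁ * c₂) (hf₂ : f₂ = c₁ + ω₂ * c₂) :
    c₁ + ω * c₂ =
      (ω - ω₂) * ((((norm (ω₁ - ω₂)) ^ 2)⁻¹ • conj (ω₁ - ω₂)) * f₁) -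
      (ω - ω₁) * ((((norm (ω₁ - ω₂)) ^ 2)⁻¹ • conj (ω₁ - ω₂)) * f₂) := by
  subst hf₁ hf₂
  set d : Octonion := ω₁ - ω₂ with hd
  set S : ℝ := Quaternion.normSq d.q1 + Quaternion.normSq d.q2 with hSdef
  have hn1 : 0 ≤ Quaternion.normSq d.q1 := Quaternion.normSq_nonneg
  have hn2 : 0 ≤ Quaternion.normSq d.q2 := Quaternion.normSq_nonneg
  have hS : norm d ^ 2 = S := Real.sq_sqrt (by linarith)
  have hd0 : d ≠ 0 := sub_ne_zero.mpr hne
  have hS0 : S ≠ 0 := by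
    intro h
    apply hd0
    rw [hSdef] at h
    have hq1 : Quaternion.normSq d.q1 = 0 := by linarith
    have hq2 : Quaternion.normSq d.q2 = 0 := by linarith
    refine Octonion.ext ?_ ?_
    · rw [zero_q1]; exact Quaternion.normSq_eq_zero.mp hq1
    · rw [zero_q2]; exact Quaternion.normSq_eq_zero.mp hq2
  have e1 : conj d * (c₁ + ω₁ * c₂) - conj d * (c₁ + ω₂ * c₂) = S • c₂ := by
    have hF : (c₁ + ω₁ * c₂) - (c₁ + ω₂ * c₂) = d * c₂ := by
      rw [hd, sub_mul]; abel
    rw [← mul_sub, hF, conj_mul_mul, ← hSdef]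
  have e2 : d * (conj d * (c₁ + ω₂ * c₂)) = S • (c₁ + ω₂ * c₂) := by
    rw [mul_conj_mul, ← hSdef]
  have key : (ω - ω₂) * (conj d * (c₁ + ω₁ * c₂)) - (ω - ω₁) * (conj d * (c₁ + ω₂ * c₂))
      = S • (c₁ + ω * c₂) := by
    have expand : (ω - ω₂) * (conj d * (c₁ + ω₁ * c₂)) - (ω - ω₁) * (conj d * (c₁ + ω₂ * c₂))
        = ω * (conj d * (c₁ + ω₁ * c₂) - conj d * (c₁ + ω₂ * c₂))
          + d * (conj d * (c₁ + ω₂ * c₂))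
          - ω₂ * (conj d * (c₁ + ω₁ * c₂) - conj d * (c₁ + ω₂ * c₂)) := by
      rw [hd, sub_mul, sub_mul, mul_sub, mul_sub, sub_mul]; abel
    rw [expand, e1, e2, oct_mul_smul_comm, oct_mul_smul_comm, smul_add]
    rw [smul_add]
    abel
  rw [hS, oct_smul_mul, oct_smul_mul, oct_mul_smul_comm, oct_mul_smul_comm, ← smul_sub, key,
    inv_smul_smul₀ hS0]
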